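/- Let ĝ_1, …, ĝ_J : ℝ → ℝ be spectral filters such that for every λ ∈ σ(L): Σ_{j=1}^{J} |ĝ_j(λ)|² = 1 and ĝ_j(λ) ĝ_{j'}(λ) = 0 for all j ≠ j', with each ĝ_j taking values in {0,1} on σ(L) (i.e., the filters form an ideal partition of the spectrum, each eigenvalue lying in the support of exactly one filter). Then there exists a partition {V₁, …, V_J} of the vertex set {1,…,N} with |V_j| = #{ℓ : ĝ_j(λ_ℓ) = 1} for each j, such that the dictionary {T_i g_j : 1 ≤ j ≤ J, i ∈ V_j} is a basis of ℝ^N; moreover each atom in this basis is orthogonal to every atom generated from a different filter. -/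

import Mathlib

open Matrix

section Helpers

set_option linter.unusedSectionVars false
variable {ι : Type} [Fintype ι] [DecidableEq ι]

/-- Converting a sum with a `dite`-extended coefficient function to a sum over a subtype. -/
lemma sum_dite_mul (p : ι → Prop) [DecidablePred p] (c : {i // p i} → ℝ) (f : ι → ℝ) :
    ∑ i, (if h : p i then c ⟨i, h⟩ else 0) * f i = ∑ i : {i // p i}, c i * f i.1 := by
  classical
  have h1 : ∑ i, (if h : p i then c ⟨i, h⟩ else 0) * f i
      = ∑ i ∈ Finset.univ.filter p, (if h : p i then c ⟨i, h⟩ else 0) * f i := by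
    refine (Finset.sum_subset (Finset.filter_subset _ _) ?_).symm
    intro x _ hx
    rw [Finset.mem_filter] at hx
    rw [dif_neg (fun hp => hx ⟨Finset.mem_univ x, hp⟩), zero_mul]
  rw [h1, Finset.sum_subtype (p := p) (Finset.univ.filter p) (by simp)
      (fun i => (if h : p i then c ⟨i, h⟩ else 0) * f i)]
  exact Finset.sum_congr rfl (fun i _ => by rw [dif_pos i.2])

/-- If a set of rows, bigger than the set of columns supporting them, exists, det is zero. -/
lemma det_eq_zero_of_rows_supported (A : Matrix ι ι ℝ) (t u : Finset ι)
    (hcard : u.card < t.card)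
    (hsupp : ∀ i ∈ t, ∀ ℓ, ℓ ∉ u → A i ℓ = 0) : A.det = 0 := by
  classical
  have hnli : ¬ LinearIndependent ℝ
      (fun i : {i // i ∈ t} => fun ℓ : {ℓ // ℓ ∈ u} => A i.1 ℓ.1) := by
    intro h
    have hle := h.fintype_card_le_finrank
    rw [Module.finrank_pi] at hle
    simp only [Fintype.card_coe] at hle
    omega
  obtain ⟨c, hc, i₀, hi₀⟩ := Fintype.not_linearIndependent_iff.mp hnli
  rw [← Matrix.exists_vecMul_eq_zero_iff]
  refine ⟨fun i => if h : i ∈ t then c ⟨i, h⟩ else 0, ?_, ?_⟩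
  · intro h0
    exact hi₀ (by simpa [i₀.2] using congr_fun h0 i₀.1)
  · funext ℓ
    show ∑ i, (if h : i ∈ t then c ⟨i, h⟩ else 0) * A i ℓ = 0
    rw [sum_dite_mul]
    by_cases hu : ℓ ∈ u
    · have h2 := congr_fun hc ⟨ℓ, hu⟩
      simp only [Finset.sum_apply, Pi.smul_apply, smul_eq_mul, Pi.zero_apply] at h2
      convert h2
    · exact Finset.sum_eq_zero (fun i _ => by rw [hsupp i.1 i.2 ℓ hu, mul_zero])

/-- Rows restricted to a supporting column set are linearly independent if `det ≠ 0`. -/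
lemma li_of_det_ne_zero (B : Matrix ι ι ℝ) (hB : B.det ≠ 0)
    (p q : ι → Prop) [DecidablePred p] [DecidablePred q]
    (hz : ∀ i, p i → ∀ ℓ, ¬ q ℓ → B i ℓ = 0) :
    LinearIndependent ℝ (fun i : {i // p i} => fun r : {r // q r} => B i.1 r.1) := by
  rw [Fintype.linearIndependent_iff]
  intro c hc
  by_contra hne
  push_neg at hne
  obtain ⟨i₀, hi₀⟩ := hne
  apply hB
  rw [← Matrix.exists_vecMul_eq_zero_iff]
  refine ⟨fun i => if h : p i then c ⟨i, h⟩ else 0, ?_, ?_⟩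
  · intro h0
    exact hi₀ (by simpa [i₀.2] using congr_fun h0 i₀.1)
  · funext ℓ
    show ∑ i, (if h : p i then c ⟨i, h⟩ else 0) * B i ℓ = 0
    rw [sum_dite_mul]
    by_cases hq : q ℓ
    · have h2 := congr_fun hc ⟨ℓ, hq⟩
      simp only [Finset.sum_apply, Pi.smul_apply, smul_eq_mul, Pi.zero_apply] at h2
      convert h2
    · exact Finset.sum_eq_zero (fun i _ => by rw [hz i.1 i.2 ℓ hq, mul_zero])
/-- **Generalized Laplace splitting**: for a nonsingular matrix and a set of "rows" classes
`P`, there is a set of columns `S` of matching size such that both diagonal blocks are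
nonsingular (expressed via linear independence). -/
lemma exists_split (A : Matrix ι ι ℝ) (hA : A.det ≠ 0) (P : ι → Prop) [DecidablePred P] :
    ∃ S : Finset ι, S.card = (Finset.univ.filter P).card ∧
      LinearIndependent ℝ (fun i : {i // i ∈ S} => fun r : {r // P r} => A i.1 r.1) ∧
      LinearIndependent ℝ (fun i : {i // i ∉ S} => fun r : {r // ¬ P r} => A i.1 r.1) := by
  classical
  set a : ι → ι → ℝ := fun i ℓ => if P ℓ then A i ℓ else 0 with ha
  set b : ι → ι → ℝ := fun i ℓ => if P ℓ then 0 else A i ℓ with hb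
  have hdet : A.det = ∑ s : Finset ι, (Matrix.of (s.piecewise a b)).det := by
    have h0 : (fun i => A i) = a + b := by
      funext i ℓ
      by_cases h : P ℓ <;> simp [ha, hb, h]
    have h1 : A.det = (Matrix.detRowAlternating (R := ℝ) (n := ι)).toMultilinearMap
        (a + b) := by rw [← h0]; rfl
    rw [h1, MultilinearMap.map_add_univ]
    rfl
  obtain ⟨s, hs⟩ : ∃ s : Finset ι, (Matrix.of (s.piecewise a b)).det ≠ 0 := by
    by_contra h
    push_neg at h
    exact hA (hdet.trans (Finset.sum_eq_zero (fun s _ => h s)))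
  set B : Matrix ι ι ℝ := Matrix.of (s.piecewise a b) with hBdef
  have hB1 : ∀ i, i ∈ s → ∀ ℓ, B i ℓ = if P ℓ then A i ℓ else 0 := by
    intro i hi ℓ
    simp [hBdef, Finset.piecewise_eq_of_mem _ _ _ hi, ha]
  have hB2 : ∀ i, i ∉ s → ∀ ℓ, B i ℓ = if P ℓ then 0 else A i ℓ := by
    intro i hi ℓ
    simp [hBdef, Finset.piecewise_eq_of_notMem _ _ _ hi, hb]
  have hcard : s.card = (Finset.univ.filter P).card := by
    by_contra hne
    rcases Nat.lt_or_ge (Finset.univ.filter P).card s.card with h | h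
    · exact hs (det_eq_zero_of_rows_supported B s (Finset.univ.filter P) h
        (fun i hi ℓ hℓ => by
          rw [hB1 i hi ℓ, if_neg (fun hP => hℓ (Finset.mem_filter.mpr ⟨Finset.mem_univ _, hP⟩))]))
    · have hlt : s.card < (Finset.univ.filter P).card := lt_of_le_of_ne h (fun h' => hne h')
      refine hs (det_eq_zero_of_rows_supported B sᶜ (Finset.univ.filter (fun ℓ => ¬ P ℓ)) ?_
        (fun i hi ℓ hℓ => ?_))
      · have e1 : sᶜ.card = Fintype.card ι - s.card := Finset.card_compl s
        have e2 : (Finset.univ.filter (fun ℓ => ¬ P ℓ)).card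
            = Fintype.card ι - (Finset.univ.filter P).card := by
          rw [Finset.filter_not, Finset.card_sdiff_of_subset (Finset.filter_subset _ _), Finset.card_univ]
        have e3 : (Finset.univ.filter P).card ≤ Fintype.card ι := by
          rw [← Finset.card_univ]; exact Finset.card_le_card (Finset.filter_subset _ _)
        omega
      · rw [Finset.mem_compl] at hi
        rw [hB2 i hi ℓ, if_pos]
        by_contra hP
        exact hℓ (Finset.mem_filter.mpr ⟨Finset.mem_univ _, hP⟩)
  refine ⟨s, hcard, ?_, ?_⟩
  · have hli := li_of_det_ne_zero B hs (fun i => i ∈ s) P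
      (fun i hi ℓ hℓ => by rw [hB1 i hi ℓ, if_neg hℓ])
    have heq : (fun i : {i // i ∈ s} => fun r : {r // P r} => A i.1 r.1)
        = (fun i : {i // i ∈ s} => fun r : {r // P r} => B i.1 r.1) := by
      funext i r
      rw [hB1 i.1 i.2 r.1, if_pos r.2]
    rw [heq]
    exact hli
  · have hli := li_of_det_ne_zero B hs (fun i => i ∉ s) (fun r => ¬ P r)
      (fun i hi ℓ hℓ => by rw [hB2 i hi ℓ, if_pos (not_not.mp hℓ)])
    have heq : (fun i : {i // i ∉ s} => fun r : {r // ¬ P r} => A i.1 r.1)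
        = (fun i : {i // i ∉ s} => fun r : {r // ¬ P r} => B i.1 r.1) := by
      funext i r
      rw [hB2 i.1 i.2 r.1, if_neg r.2]
    rw [heq]
    exact hli
/-- **Key combinatorial lemma**: columns of a nonsingular matrix can be partitioned to match
any grouping of the rows into classes, with each diagonal block nonsingular. -/
lemma exists_class_partition (J : ℕ) : ∀ {ι : Type} [Fintype ι] [DecidableEq ι]
    (A : Matrix ι ι ℝ), A.det ≠ 0 → ∀ (φ : ι → Fin J),
    ∃ V : Fin J → Finset ι,
      (∀ j j' : Fin J, j ≠ j' → Disjoint (V j) (V j')) ∧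
      (Finset.univ.biUnion V = Finset.univ) ∧
      (∀ j, (V j).card = (Finset.univ.filter (fun ℓ => φ ℓ = j)).card) ∧
      (∀ j, LinearIndependent ℝ
        (fun i : {i // i ∈ V j} => fun r : {r // φ r = j} => A i.1 r.1)) := by
  induction J with
  | zero =>
    intro ι _ _ A hA φ
    haveI : IsEmpty ι := ⟨fun i => (φ i).elim0⟩
    refine ⟨fun j => j.elim0, fun j => j.elim0, ?_, fun j => j.elim0, fun j => j.elim0⟩
    simp [Finset.univ_eq_empty]
  | succ J IH =>
    intro ι _ _ A hA φ
    classical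
    obtain ⟨S, hScard, hLIlast, hLIrest⟩ :=
      exists_split A hA (fun r => φ r = Fin.last J)
    have hcards : Fintype.card {i : ι // i ∉ S} = Fintype.card {r : ι // ¬ φ r = Fin.last J} := by
      rw [Fintype.card_subtype_compl, Fintype.card_subtype_compl, Fintype.card_subtype]
      congr 1
      rw [Finset.filter_mem_eq_inter, Finset.univ_inter, hScard, Fintype.card_subtype]
    set ε := Fintype.equivOfCardEq hcards with hε
    set A' : Matrix {i : ι // i ∉ S} {i : ι // i ∉ S} ℝ :=
      Matrix.of (fun i r => A i.1 (ε r).1) with hA'def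
    have hA'det : A'.det ≠ 0 := by
      have hli : LinearIndependent ℝ (fun i : {i // i ∉ S} => A' i) := by
        have h2 := hLIrest.map' (LinearEquiv.funCongrLeft ℝ ℝ ε).toLinearMap
          (LinearEquiv.ker _)
        exact h2
      exact isUnit_iff_ne_zero.mp
        ((Matrix.isUnit_iff_isUnit_det A').mp (Matrix.linearIndependent_rows_iff_isUnit.mp hli))
    set φ' : {i : ι // i ∉ S} → Fin J := fun r => (φ (ε r).1).castPred (ε r).2 with hφ'
    obtain ⟨V', hdisj', hcover', hcard', hLI'⟩ := IH A' hA'det φ'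
    set emb : {i : ι // i ∉ S} ↪ ι := Function.Embedding.subtype _ with hemb
    set V : Fin (J+1) → Finset ι :=
      fun j => if h : j = Fin.last J then S else ((V' (j.castPred h)).map emb) with hV
    have hVlast : V (Fin.last J) = S := dif_pos rfl
    have hVc : ∀ j₀ : Fin J, V j₀.castSucc = (V' j₀).map emb := by
      intro j₀
      rw [hV]
      simp only [dif_neg (Fin.castSucc_lt_last j₀).ne, Fin.castPred_castSucc]
    have hmemV : ∀ (j₀ : Fin J) (x : ι), x ∈ V j₀.castSucc ↔
        ∃ h : x ∉ S, ⟨x, h⟩ ∈ V' j₀ := by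
      intro j₀ x
      rw [hVc j₀]
      constructor
      · intro hx
        obtain ⟨a, ha, rfl⟩ := Finset.mem_map.mp hx
        exact ⟨a.2, ha⟩
      · rintro ⟨h, hmem⟩
        exact Finset.mem_map.mpr ⟨⟨x, h⟩, hmem, rfl⟩
    -- the equivalence for class `j₀.castSucc`
    have hne_last : ∀ (j₀ : Fin J) (x : ι), φ x = j₀.castSucc → ¬ φ x = Fin.last J := by
      intro j₀ x h hlast
      rw [h] at hlast
      exact (Fin.castSucc_lt_last j₀).ne hlast
    have key : ∀ j₀ : Fin J,
        ∃ e : {x : ι // φ x = j₀.castSucc} ≃ {r : {i : ι // i ∉ S} // φ' r = j₀},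
          ∀ x, (ε (e x).1).1 = x.1 := by
      intro j₀
      refine ⟨⟨fun x => ⟨ε.symm ⟨x.1, hne_last j₀ x.1 x.2⟩, ?_⟩,
              fun r => ⟨(ε r.1).1, ?_⟩, fun x => ?_, fun r => ?_⟩, fun x => ?_⟩
      · show (φ (ε (ε.symm ⟨x.1, _⟩)).1).castPred _ = j₀
        apply Fin.castSucc_injective
        rw [Fin.castSucc_castPred]
        rw [Equiv.apply_symm_apply]
        exact x.2
      · show φ (ε r.1).1 = j₀.castSucc
        have h4 := congrArg Fin.castSucc r.2
        simp only [hφ'] at h4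
        rw [Fin.castSucc_castPred] at h4
        exact h4
      · apply Subtype.ext
        simp
      · apply Subtype.ext
        apply Subtype.ext
        simp
      · show (ε (ε.symm ⟨x.1, _⟩)).1 = x.1
        rw [Equiv.apply_symm_apply]
    refine ⟨V, ?_, ?_, ?_, ?_⟩
    · -- disjointness
      intro j j' hne
      induction j using Fin.lastCases with
      | last =>
        induction j' using Fin.lastCases with
        | last => exact absurd rfl hne
        | cast j₁ =>
          rw [Finset.disjoint_left]
          intro x hx hx'
          obtain ⟨h, _⟩ := (hmemV j₁ x).mp hx'
          exact h (hVlast ▸ hx)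
      | cast j₀ =>
        induction j' using Fin.lastCases with
        | last =>
          rw [Finset.disjoint_right]
          intro x hx hx'
          obtain ⟨h, _⟩ := (hmemV j₀ x).mp hx'
          exact h (hVlast ▸ hx)
        | cast j₁ =>
          rw [hVc j₀, hVc j₁, Finset.disjoint_map]
          exact hdisj' j₀ j₁ (fun h => hne (by rw [h]))
    · -- cover
      apply Finset.eq_univ_iff_forall.mpr
      intro x
      rw [Finset.mem_biUnion]
      by_cases hx : x ∈ S
      · exact ⟨Fin.last J, Finset.mem_univ _, hVlast ▸ hx⟩
      · have hx' : (⟨x, hx⟩ : {i : ι // i ∉ S}) ∈ Finset.univ.biUnion V' := by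
          rw [hcover']; exact Finset.mem_univ _
        obtain ⟨j₀, _, hj₀⟩ := Finset.mem_biUnion.mp hx'
        exact ⟨j₀.castSucc, Finset.mem_univ _, (hmemV j₀ x).mpr ⟨hx, hj₀⟩⟩
    · -- cards
      intro j
      induction j using Fin.lastCases with
      | last => rw [hVlast]; exact hScard
      | cast j₀ =>
        obtain ⟨e, -⟩ := key j₀
        rw [hVc j₀, Finset.card_map, hcard' j₀]
        rw [← Fintype.card_subtype, ← Fintype.card_subtype]
        exact (Fintype.card_congr e).symm
    · -- linear independence
      intro j
      induction j using Fin.lastCases with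
      | last =>
        rw [hVlast]
        exact hLIlast
      | cast j₀ =>
        obtain ⟨e, he⟩ := key j₀
        have h2 := (hLI' j₀).map'
          (LinearEquiv.funCongrLeft ℝ ℝ e).toLinearMap (LinearEquiv.ker _)
        have h3 : LinearIndependent ℝ
            (fun i' : {i' // i' ∈ V' j₀} => fun x : {x : ι // φ x = j₀.castSucc} =>
              A i'.1.1 x.1) := by
          have heq : (fun i' : {i' // i' ∈ V' j₀} => fun x : {x : ι // φ x = j₀.castSucc} =>
                A i'.1.1 x.1)
              = (fun i' : {i' // i' ∈ V' j₀} =>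
                  (LinearEquiv.funCongrLeft ℝ ℝ e).toLinearMap
                    (fun r : {r // φ' r = j₀} => A' i'.1 r.1)) := by
            funext i' x
            show A i'.1.1 x.1 = A' i'.1 (e x).1
            show A i'.1.1 x.1 = A i'.1.1 (ε (e x).1).1
            rw [he x]
          rw [heq]
          exact h2
        -- transfer along the membership equivalence
        obtain ⟨e1, he1⟩ : ∃ e1 : {i' // i' ∈ V' j₀} ≃ {i // i ∈ V j₀.castSucc},
            ∀ i', (e1 i').1 = i'.1.1 := by
          refine ⟨⟨fun i' => ⟨i'.1.1, (hmemV j₀ i'.1.1).mpr ⟨i'.1.2, i'.2⟩⟩,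
            fun i => ⟨⟨i.1, ((hmemV j₀ i.1).mp i.2).1⟩, ((hmemV j₀ i.1).mp i.2).2⟩,
            fun i' => Subtype.ext (Subtype.ext rfl),
            fun i => Subtype.ext rfl⟩, fun i' => rfl⟩
        have h4 : ((fun i : {i // i ∈ V j₀.castSucc} =>
              fun r : {r : ι // φ r = j₀.castSucc} => A i.1 r.1) ∘ e1)
            = (fun i' : {i' // i' ∈ V' j₀} =>
              fun x : {x : ι // φ x = j₀.castSucc} => A i'.1.1 x.1) := by
          funext i'
          show (fun r : {r : ι // φ r = j₀.castSucc} => A (e1 i').1 r.1) = _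
          rw [he1 i']
        exact (linearIndependent_equiv' e1 h4).mp h3

end Helpers


/-- The combinatorial graph Laplacian `L = D - W`. -/
noncomputable def graphLaplacian {N : ℕ} (W : Matrix (Fin N) (Fin N) ℝ) :
    Matrix (Fin N) (Fin N) ℝ :=
  Matrix.diagonal (fun m => ∑ m', W m m') - W

/-- `ĝ(L) = U ĝ(Λ) Uᵀ`, given the eigendecomposition data `U`, `lam`. -/
noncomputable def filterMatrix {N : ℕ} (U : Matrix (Fin N) (Fin N) ℝ) (lam : Fin N → ℝ)
    (g : ℝ → ℝ) : Matrix (Fin N) (Fin N) ℝ :=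
  U * Matrix.diagonal (fun ℓ => g (lam ℓ)) * U.transpose

/-- The localized atom `T_i g = ĝ(L) δ_i`. -/
noncomputable def atom {N : ℕ} (U : Matrix (Fin N) (Fin N) ℝ) (lam : Fin N → ℝ)
    (g : ℝ → ℝ) (i : Fin N) : Fin N → ℝ :=
  (filterMatrix U lam g).mulVec (Pi.single i 1)

/-- Suppose the filters `ĝ_1, …, ĝ_J` form an ideal partition of the
spectrum: at every `λ ∈ σ(L)` they take values in `{0,1}`, are pairwise disjoint, and their
squares sum to `1`.  Then there exists a partition `{V₁, …, V_J}` of the vertex set with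
`|V_j| = #{ℓ : ĝ_j(λ_ℓ) = 1}` such that the dictionary `{T_i g_j : j, i ∈ V_j}` is a basis
of `ℝ^N`, and each atom is orthogonal to every atom generated from a different filter. -/
theorem criticallySampledIdealBasis (N : ℕ) (W : Matrix (Fin N) (Fin N) ℝ)
    (hWsymm : W.IsSymm) (hWnn : ∀ m n, 0 ≤ W m n) (hWdiag : ∀ m, W m m = 0)
    (U : Matrix (Fin N) (Fin N) ℝ) (lam : Fin N → ℝ)
    (hU : U * U.transpose = 1)
    (hL : graphLaplacian W = U * Matrix.diagonal lam * U.transpose)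
    (J : ℕ) (g : Fin J → ℝ → ℝ)
    (hsum : ∀ ℓ : Fin N, ∑ j, (g j (lam ℓ)) ^ 2 = 1)
    (hdisjoint : ∀ ℓ : Fin N, ∀ j j' : Fin J, j ≠ j' → g j (lam ℓ) * g j' (lam ℓ) = 0)
    (hideal : ∀ (j : Fin J) (ℓ : Fin N), g j (lam ℓ) = 0 ∨ g j (lam ℓ) = 1) :
    ∃ V : Fin J → Finset (Fin N),
      (∀ j j' : Fin J, j ≠ j' → Disjoint (V j) (V j')) ∧
      (Finset.univ.biUnion V = Finset.univ) ∧
      (∀ j, (V j).card = Nat.card {ℓ : Fin N // g j (lam ℓ) = 1}) ∧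
      LinearIndependent ℝ
        (fun p : (Σ j : Fin J, {i : Fin N // i ∈ V j}) => atom U lam (g p.1) p.2.1) ∧
      Submodule.span ℝ
        (Set.range (fun p : (Σ j : Fin J, {i : Fin N // i ∈ V j}) =>
          atom U lam (g p.1) p.2.1)) = ⊤ ∧
      (∀ j j' : Fin J, j ≠ j' → ∀ i ∈ V j, ∀ i' ∈ V j',
        atom U lam (g j) i ⬝ᵥ atom U lam (g j') i' = 0) := by
  classical
  -- each eigenvalue belongs to exactly one filter
  have hex : ∀ ℓ : Fin N, ∃ j, g j (lam ℓ) = 1 := by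
    intro ℓ
    by_contra h
    push_neg at h
    have hz : ∀ j, g j (lam ℓ) = 0 := fun j => (hideal j ℓ).resolve_right (h j)
    have h1 := hsum ℓ
    rw [Finset.sum_eq_zero (fun j _ => by rw [hz j]; ring)] at h1
    exact zero_ne_one h1
  choose φ hφ1 using hex
  have hφ : ∀ ℓ j, g j (lam ℓ) = 1 ↔ φ ℓ = j := by
    intro ℓ j
    constructor
    · intro h
      by_contra hne
      have h2 := hdisjoint ℓ j (φ ℓ) (fun he => hne he.symm)
      rw [h, hφ1 ℓ] at h2
      norm_num at h2
    · rintro rfl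
      exact hφ1 ℓ
  have hφ0 : ∀ ℓ j, φ ℓ ≠ j → g j (lam ℓ) = 0 := by
    intro ℓ j h
    exact (hideal j ℓ).resolve_right (fun h1 => h ((hφ ℓ j).mp h1))
  -- orthogonality of U
  have hUtU : Uᵀ * U = 1 := mul_eq_one_comm.mp hU
  have hUdet : U.det ≠ 0 := by
    have h1 : U.det * U.det = 1 := by
      have h2 := congrArg Matrix.det hU
      rwa [Matrix.det_mul, Matrix.det_transpose, Matrix.det_one] at h2
    intro h
    rw [h, mul_zero] at h1
    exact zero_ne_one h1
  obtain ⟨V, hdisj, hcover, hVcard, hLI⟩ := exists_class_partition J U hUdet φ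
  -- the action of `Uᵀ` on atoms
  have hatom : ∀ (j : Fin J) (i : Fin N),
      Uᵀ *ᵥ atom U lam (g j) i = fun ℓ => g j (lam ℓ) * U i ℓ := by
    intro j i
    show Uᵀ *ᵥ ((U * Matrix.diagonal (fun ℓ => g j (lam ℓ)) * Uᵀ) *ᵥ Pi.single i 1) = _
    rw [Matrix.mulVec_mulVec]
    have hUB : Uᵀ * (U * Matrix.diagonal (fun ℓ => g j (lam ℓ)) * Uᵀ)
        = Matrix.diagonal (fun ℓ => g j (lam ℓ)) * Uᵀ := by
      rw [← Matrix.mul_assoc, ← Matrix.mul_assoc, hUtU, Matrix.one_mul]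
    rw [hUB, Matrix.mulVec_single]
    funext ℓ
    simp [Matrix.diagonal_mul, Matrix.transpose_apply]
  -- linear independence of the atoms
  have hLIatoms : LinearIndependent ℝ
      (fun p : (Σ j : Fin J, {i : Fin N // i ∈ V j}) => atom U lam (g p.1) p.2.1) := by
    rw [Fintype.linearIndependent_iff]
    intro c hc
    have hc2 : ∀ ℓ : Fin N,
        (∑ p : (Σ j : Fin J, {i : Fin N // i ∈ V j}),
          c p * (g p.1 (lam ℓ) * U p.2.1 ℓ)) = 0 := by
      intro ℓ
      have h1 := congrArg (Matrix.mulVecLin Uᵀ) hc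
      rw [map_sum, map_zero] at h1
      simp only [_root_.map_smul, Matrix.mulVecLin_apply, Matrix.mulVec_smul] at h1
      have h2 := congr_fun h1 ℓ
      simp only [Finset.sum_apply, Pi.smul_apply, smul_eq_mul, Pi.zero_apply, hatom] at h2
      exact h2
    have hsum0 : ∀ j : Fin J,
        (∑ i' : {i : Fin N // i ∈ V j}, c ⟨j, i'⟩ •
          (fun r : {r : Fin N // φ r = j} => U i'.1 r.1)) = 0 := by
      intro j
      funext r
      simp only [Finset.sum_apply, Pi.smul_apply, smul_eq_mul, Pi.zero_apply]
      have h2 := hc2 r.1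
      rw [← Finset.univ_sigma_univ, Finset.sum_sigma] at h2
      rw [Finset.sum_eq_single_of_mem j (Finset.mem_univ j) ?side] at h2
      case side =>
        intro j' _ hne
        apply Finset.sum_eq_zero
        intro i' _
        rw [hφ0 r.1 j' (by rw [r.2]; exact fun he => hne he.symm)]
        ring
      have hg1 : g j (lam r.1) = 1 := (hφ r.1 j).mpr r.2
      simp only [hg1, one_mul] at h2
      exact h2
    intro p
    obtain ⟨j, i⟩ := p
    exact Fintype.linearIndependent_iff.mp (hLI j) (fun i' => c ⟨j, i'⟩) (hsum0 j) i
  -- cardinality of the dictionary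
  have hcardsum : Fintype.card (Σ j : Fin J, {i : Fin N // i ∈ V j}) = N := by
    rw [Fintype.card_sigma]
    calc ∑ j, Fintype.card {i : Fin N // i ∈ V j}
        = ∑ j, (V j).card := by
          exact Finset.sum_congr rfl (fun j _ => Fintype.card_coe _)
      _ = ∑ j, (Finset.univ.filter (fun ℓ => φ ℓ = j)).card := by
          exact Finset.sum_congr rfl (fun j _ => hVcard j)
      _ = (Finset.univ : Finset (Fin N)).card :=
          (Finset.card_eq_sum_card_fiberwise (fun x _ => Finset.mem_univ (φ x))).symm
      _ = N := by simp
  -- pairwise orthogonality of filter matrices across classes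
  have horth : ∀ j j' : Fin J, j ≠ j' →
      filterMatrix U lam (g j) * filterMatrix U lam (g j') = 0 := by
    intro j j' hne
    show (U * Matrix.diagonal (fun ℓ => g j (lam ℓ)) * Uᵀ) *
        (U * Matrix.diagonal (fun ℓ => g j' (lam ℓ)) * Uᵀ) = 0
    have h1 : Uᵀ * (U * Matrix.diagonal (fun ℓ => g j' (lam ℓ)) * Uᵀ)
        = Matrix.diagonal (fun ℓ => g j' (lam ℓ)) * Uᵀ := by
      rw [← Matrix.mul_assoc, ← Matrix.mul_assoc, hUtU, Matrix.one_mul]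
    rw [Matrix.mul_assoc (U * Matrix.diagonal fun ℓ => g j (lam ℓ)) Uᵀ _, h1,
      Matrix.mul_assoc U (Matrix.diagonal fun ℓ => g j (lam ℓ)) _,
      ← Matrix.mul_assoc (Matrix.diagonal fun ℓ => g j (lam ℓ))
        (Matrix.diagonal fun ℓ => g j' (lam ℓ)) Uᵀ,
      Matrix.diagonal_mul_diagonal]
    have hz : (fun ℓ => g j (lam ℓ) * g j' (lam ℓ)) = fun _ => (0 : ℝ) := by
      funext ℓ
      exact hdisjoint ℓ j j' hne
    rw [hz]
    simp
  have hsymm : ∀ j, (filterMatrix U lam (g j))ᵀ = filterMatrix U lam (g j) := by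
    intro j
    show (U * Matrix.diagonal (fun ℓ => g j (lam ℓ)) * Uᵀ)ᵀ
        = U * Matrix.diagonal (fun ℓ => g j (lam ℓ)) * Uᵀ
    rw [Matrix.transpose_mul, Matrix.transpose_mul, Matrix.transpose_transpose,
      Matrix.diagonal_transpose, Matrix.mul_assoc]
  refine ⟨V, hdisj, hcover, ?_, hLIatoms, ?_, ?_⟩
  · -- cardinalities
    intro j
    have hcs := Fintype.card_of_subtype (p := fun ℓ => g j (lam ℓ) = 1)
      (Finset.univ.filter (fun ℓ => φ ℓ = j)) (fun x => by
        simp only [Finset.mem_filter, Finset.mem_univ, true_and]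
        exact ⟨fun h => (hφ x j).mpr h, fun h => (hφ x j).mp h⟩)
    rw [hVcard j, Nat.card_eq_fintype_card, hcs]
  · -- spanning
    exact hLIatoms.span_eq_top_of_card_eq_finrank'
      (by rw [hcardsum, Module.finrank_pi, Fintype.card_fin])
  · -- orthogonality of atoms from distinct filters
    intro j j' hne i _ i' _
    show (filterMatrix U lam (g j) *ᵥ Pi.single i 1) ⬝ᵥ
        (filterMatrix U lam (g j') *ᵥ Pi.single i' 1) = 0
    rw [Matrix.dotProduct_mulVec, ← Matrix.vecMul_transpose, hsymm j,
      Matrix.vecMul_vecMul, horth j j' hne, Matrix.vecMul_zero, zero_dotProduct]
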